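/- For all integers j ≥ 0: D_3(0, 2j+2) = F_{2j+1}, D_3(1, 2j+1) = F_{2j+1}, D_3(2, 2j+2) = F_{2j+2}, and D_3(3, 2j+3) = F_{2j+2}, where F_m is the m-th Fibonacci number. -/
import Mathlib


/-- Number of directed paths from `(0,0)` to `(j,i)` in the Bratteli diagram for `SU(2)_k`. -/
def bratteliD (k : ℕ) : ℕ → ℕ → ℕ
  | i, 0 => if i = 0 then 1 else 0
  | i, j + 1 =>
      if i ≤ k then
        (if 1 ≤ i then bratteliD k (i - 1) j else 0) +
        (if i + 1 ≤ k then bratteliD k (i + 1) j else 0)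
      else 0

lemma bD0 (n : ℕ) : bratteliD 3 0 (n+1) = bratteliD 3 1 n := by simp [bratteliD]
lemma bD1 (n : ℕ) : bratteliD 3 1 (n+1) = bratteliD 3 0 n + bratteliD 3 2 n := by simp [bratteliD]
lemma bD2 (n : ℕ) : bratteliD 3 2 (n+1) = bratteliD 3 1 n + bratteliD 3 3 n := by simp [bratteliD]
lemma bD3 (n : ℕ) : bratteliD 3 3 (n+1) = bratteliD 3 2 n := by simp [bratteliD]

theorem bratteliD_three_values (j : ℕ) :
    bratteliD 3 0 (2 * j + 2) = Nat.fib (2 * j + 1) ∧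
    bratteliD 3 1 (2 * j + 1) = Nat.fib (2 * j + 1) ∧
    bratteliD 3 2 (2 * j + 2) = Nat.fib (2 * j + 2) ∧
    bratteliD 3 3 (2 * j + 3) = Nat.fib (2 * j + 2) := by
  induction j with
  | zero => refine ⟨?_, ?_, ?_, ?_⟩ <;> decide
  | succ j ih =>
    obtain ⟨h0, h1, h2, h3⟩ := ih
    have f1 : Nat.fib (2 * j + 3) = Nat.fib (2 * j + 1) + Nat.fib (2 * j + 2) := by
      rw [show 2 * j + 3 = (2 * j + 1) + 2 by ring, Nat.fib_add_two,
        show (2 * j + 1) + 1 = 2 * j + 2 by ring]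
    have f2 : Nat.fib (2 * j + 4) = Nat.fib (2 * j + 2) + Nat.fib (2 * j + 3) := by
      rw [show 2 * j + 4 = (2 * j + 2) + 2 by ring, Nat.fib_add_two,
        show (2 * j + 2) + 1 = 2 * j + 3 by ring]
    have n1 : bratteliD 3 1 ((2 * j + 2) + 1) = Nat.fib (2 * j + 3) := by
      rw [bD1, h0, h2, f1]
    have n2 : bratteliD 3 2 ((2 * j + 2) + 2) = Nat.fib (2 * j + 4) := by
      rw [show (2 * j + 2) + 2 = ((2 * j + 2) + 1) + 1 by ring, bD2, n1, h3,
        Nat.add_comm, f2]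
    refine ⟨?_, ?_, ?_, ?_⟩
    · rw [show 2 * (j + 1) + 2 = ((2 * j + 2) + 1) + 1 by ring, bD0, n1]
      congr 1
    · rw [show 2 * (j + 1) + 1 = (2 * j + 2) + 1 by ring, n1]
    · rw [show 2 * (j + 1) + 2 = (2 * j + 2) + 2 by ring, n2]
    · rw [show 2 * (j + 1) + 3 = ((2 * j + 2) + 2) + 1 by ring, bD3, n2]
      congr 1
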